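/- For a nondegenerate model of walk and a point P = ([a:b],[c:d]) of the kernel curve Ē_t: P is the unique point of Ē_t whose first coordinate equals [a:b] if and only if Δ₁(a,b) = 0; and P is the unique point of Ē_t whose second coordinate equals [c:d] if and only if Δ₂(c,d) = 0. (Uniqueness in the fiber expresses that P is fixed by the vertical switch ι₁, respectively the horizontal switch ι₂, of Ē_t, where {P, ι₁(P)} = Ē_t ∩ ({[a:b]}×ℙ¹(ℂ)) and {P, ι₂(P)} = Ē_t ∩ (ℙ¹(ℂ)×{[c:d]}).) -/

import Mathlib

open MvPolynomial

noncomputable section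

variable (d : ℤ → ℤ → ℝ) (t : ℝ)


lemma quadRoot (A B C : ℂ) (h : ¬(A = 0 ∧ B = 0)) : ∃ y : ℂ, A*y^2 + B*y + C = 0 := by
  by_cases hA : A = 0
  · have hB : B ≠ 0 := fun hB => h ⟨hA, hB⟩
    exact ⟨-C/B, by field_simp [hA]; linear_combination C^2*hA⟩
  · obtain ⟨s, hs⟩ := IsAlgClosed.exists_pow_nat_eq (B^2 - 4*A*C) (n := 2) (by norm_num)
    refine ⟨(-B+s)/(2*A), ?_⟩
    field_simp
    linear_combination hs

lemma quadUnique (A B C c e : ℂ) (hABC : ¬(A = 0 ∧ B = 0 ∧ C = 0))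
    (hce : (c, e) ≠ (0,0)) (hroot : A*c^2 + B*c*e + C*e^2 = 0) :
    (∀ c' e' : ℂ, (c', e') ≠ (0,0) → A*c'^2 + B*c'*e' + C*e'^2 = 0 →
      ∃ mu : ℂ, mu ≠ 0 ∧ c' = mu*c ∧ e' = mu*e) ↔ B^2 - 4*A*C = 0 := by
  constructor
  · intro huniq
    by_cases hA : A = 0
    · by_cases hB : B = 0
      · simp [hA, hB]
      · exfalso
        obtain ⟨mu, hmu, h1, h2⟩ := huniq 1 0 (by simp) (by rw [hA]; ring)
        have he : e = 0 := by
          rcases mul_eq_zero.1 h2.symm with h | h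
          · exact absurd h hmu
          · exact h
        obtain ⟨mu', hmu', h1', h2'⟩ := huniq C (-B) (by simp [hB]) (by rw [hA]; ring)
        rw [he, mul_zero] at h2'
        exact hB (neg_eq_zero.1 h2')
    · obtain ⟨s, hs⟩ := IsAlgClosed.exists_pow_nat_eq (B^2 - 4*A*C) (n := 2) (by norm_num)
      obtain ⟨m1, hm1, p1, q1⟩ := huniq (-B+s) (2*A) (by simp [hA]) (by linear_combination A*hs)
      obtain ⟨m2, hm2, p2, q2⟩ := huniq (-B-s) (2*A) (by simp [hA]) (by linear_combination A*hs)
      have he : e ≠ 0 := by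
        intro h
        rw [h, mul_zero] at q1
        exact hA (by linear_combination q1/2)
      have hmm : m1 = m2 := mul_right_cancel₀ he (q1.symm.trans q2)
      have h2s : 2*s = m1*c - m2*c := by linear_combination p1 - p2
      rw [hmm, sub_self] at h2s
      have hs0 : s = 0 := by linear_combination h2s/2
      rw [← hs, hs0]; ring
  · intro hdisc c' e' hce' hroot'
    by_cases hA : A = 0
    · have hB : B = 0 := by
        have h2 : B^2 = 0 := by rw [hA] at hdisc; linear_combination hdisc
        exact pow_eq_zero_iff (n := 2) (by norm_num) |>.1 h2
      have hC : C ≠ 0 := fun h => hABC ⟨hA, hB, h⟩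
      have he : e = 0 := by
        have : C * e^2 = 0 := by rw [hA, hB] at hroot; linear_combination hroot
        have := (mul_eq_zero.1 this).resolve_left hC
        exact pow_eq_zero_iff (n := 2) (by norm_num) |>.1 this
      have he' : e' = 0 := by
        have : C * e'^2 = 0 := by rw [hA, hB] at hroot'; linear_combination hroot'
        have := (mul_eq_zero.1 this).resolve_left hC
        exact pow_eq_zero_iff (n := 2) (by norm_num) |>.1 this
      have hc : c ≠ 0 := by
        intro h; exact hce (by rw [h, he])
      have hc' : c' ≠ 0 := by
        intro h; exact hce' (by rw [h, he'])
      exact ⟨c'/c, div_ne_zero hc' hc, by field_simp, by rw [he, he']; ring⟩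
    have he : e ≠ 0 := by
      intro h
      have : A * c^2 = 0 := by rw [h] at hroot; linear_combination hroot
      have hc := pow_eq_zero_iff (n := 2) (by norm_num) |>.1 ((mul_eq_zero.1 this).resolve_left hA)
      exact hce (by rw [hc, h])
    have he' : e' ≠ 0 := by
      intro h
      have : A * c'^2 = 0 := by rw [h] at hroot'; linear_combination hroot'
      have hc := pow_eq_zero_iff (n := 2) (by norm_num) |>.1 ((mul_eq_zero.1 this).resolve_left hA)
      exact hce' (by rw [hc, h])
    have h1 : 2*A*c + B*e = 0 := by
      have hsq : (2*A*c + B*e)^2 = 0 := by linear_combination e^2*hdisc + 4*A*hroot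
      exact pow_eq_zero_iff (n := 2) (by norm_num) |>.1 hsq
    have h1' : 2*A*c' + B*e' = 0 := by
      have hsq : (2*A*c' + B*e')^2 = 0 := by linear_combination e'^2*hdisc + 4*A*hroot'
      exact pow_eq_zero_iff (n := 2) (by norm_num) |>.1 hsq
    refine ⟨e'/e, div_ne_zero he' he, ?_, by field_simp⟩
    have key : (2*A) * (c' * e) = (2*A) * (c * e') := by linear_combination e*h1' - e'*h1
    have hkey : c' * e = c * e' := mul_left_cancel₀ (by simpa using hA) key
    field_simp
    linear_combination hkey

/-- The kernel polynomial `K(x,y,t) = xy(1 - t·Σ_{(i,j)∈{-1,0,1}²} d_{i,j} x^i y^j)`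
as an element of `ℂ[x,y] = MvPolynomial (Fin 2) ℂ` (variable `0` is `x`, variable `1` is `y`). -/
def kernelK : MvPolynomial (Fin 2) ℂ :=
  X 0 * X 1 - C ((t : ℝ) : ℂ) *
    ∑ i ∈ Finset.range 3, ∑ j ∈ Finset.range 3,
      C ((d ((i : ℤ) - 1) ((j : ℤ) - 1) : ℝ) : ℂ) * X 0 ^ i * X 1 ^ j

/-- The standing hypotheses: the weights `d_{i,j}` for `(i,j) ∈ {-1,0,1}²` lie in `[0,1]`
and sum to `1`, `t ∈ (0,1)`, and `t` is transcendental over `ℚ(d_{i,j})`, i.e. no nonzero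
polynomial with coefficients in the subfield of `ℝ` generated by the `d_{i,j}` vanishes at `t`. -/
def WalkHyp : Prop :=
  (∀ i ∈ ({-1, 0, 1} : Set ℤ), ∀ j ∈ ({-1, 0, 1} : Set ℤ), 0 ≤ d i j ∧ d i j ≤ 1) ∧
  (∑ i ∈ ({-1, 0, 1} : Finset ℤ), ∑ j ∈ ({-1, 0, 1} : Finset ℤ), d i j = 1) ∧
  (0 < t ∧ t < 1) ∧
  (∀ p : Polynomial ℝ,
      (∀ n, p.coeff n ∈
        Subfield.closure
          {x : ℝ | ∃ i ∈ ({-1, 0, 1} : Set ℤ), ∃ j ∈ ({-1, 0, 1} : Set ℤ), x = d i j}) →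
      Polynomial.eval t p = 0 → p = 0)

/-- The model is degenerate if `K` is reducible in `ℂ[x,y]`, or has degree `≤ 1` in `x`,
or degree `≤ 1` in `y`. -/
def Degenerate : Prop :=
  ¬ Irreducible (kernelK d t) ∨
    degreeOf 0 (kernelK d t) ≤ 1 ∨ degreeOf 1 (kernelK d t) ≤ 1

/-- The bihomogenized kernel
`K̄(x₀,x₁,y₀,y₁) = x₀x₁y₀y₁ - t Σ_{i,j=0}^{2} d_{i-1,j-1} x₀^i x₁^{2-i} y₀^j y₁^{2-j}`,
with variables `0 ↦ x₀`, `1 ↦ x₁`, `2 ↦ y₀`, `3 ↦ y₁`. -/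
def kernelKbar : MvPolynomial (Fin 4) ℂ :=
  X 0 * X 1 * X 2 * X 3 - C ((t : ℝ) : ℂ) *
    ∑ i ∈ Finset.range 3, ∑ j ∈ Finset.range 3,
      C ((d ((i : ℤ) - 1) ((j : ℤ) - 1) : ℝ) : ℂ) *
        X 0 ^ i * X 1 ^ (2 - i) * X 2 ^ j * X 3 ^ (2 - j)

/-- `([a:b],[c:e])` lies on the kernel curve `Ē_t ⊆ ℙ¹(ℂ)×ℙ¹(ℂ)`. -/
def OnKernelCurve (a b c e : ℂ) : Prop :=
  eval ![a, b, c, e] (kernelKbar d t) = 0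

/-- `([a:b],[c:e])` is a singular point of the kernel curve `Ē_t`: it lies on `Ē_t`
and all four partial derivatives of `K̄` vanish there. -/
def SingularAt (a b c e : ℂ) : Prop :=
  OnKernelCurve d t a b c e ∧
    ∀ k : Fin 4, eval ![a, b, c, e] (pderiv k (kernelKbar d t)) = 0

/-- `Ā₁(x₀,x₁)`: the coefficient of `y₀²` in `K̄`. -/
def Abar1 : MvPolynomial (Fin 2) ℂ :=
  -(C ((t : ℝ) : ℂ)) *
    (C ((d (-1) 1 : ℝ) : ℂ) * X 1 ^ 2 + C ((d 0 1 : ℝ) : ℂ) * X 0 * X 1 +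
      C ((d 1 1 : ℝ) : ℂ) * X 0 ^ 2)

/-- `B̄₁(x₀,x₁)`: the coefficient of `y₀y₁` in `K̄`. -/
def Bbar1 : MvPolynomial (Fin 2) ℂ :=
  X 0 * X 1 - C ((t : ℝ) : ℂ) *
    (C ((d (-1) 0 : ℝ) : ℂ) * X 1 ^ 2 + C ((d 0 0 : ℝ) : ℂ) * X 0 * X 1 +
      C ((d 1 0 : ℝ) : ℂ) * X 0 ^ 2)

/-- `C̄₁(x₀,x₁)`: the coefficient of `y₁²` in `K̄`. -/
def Cbar1 : MvPolynomial (Fin 2) ℂ :=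
  -(C ((t : ℝ) : ℂ)) *
    (C ((d (-1) (-1) : ℝ) : ℂ) * X 1 ^ 2 + C ((d 0 (-1) : ℝ) : ℂ) * X 0 * X 1 +
      C ((d 1 (-1) : ℝ) : ℂ) * X 0 ^ 2)

/-- The discriminant `Δ₁(x₀,x₁) = B̄₁² - 4Ā₁C̄₁`, homogeneous of degree 4. -/
def Delta1 : MvPolynomial (Fin 2) ℂ :=
  Bbar1 d t ^ 2 - 4 * Abar1 d t * Cbar1 d t

/-- `Ā₂(y₀,y₁)`: the coefficient of `x₀²` in `K̄`. -/
def Abar2 : MvPolynomial (Fin 2) ℂ :=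
  -(C ((t : ℝ) : ℂ)) *
    (C ((d 1 (-1) : ℝ) : ℂ) * X 1 ^ 2 + C ((d 1 0 : ℝ) : ℂ) * X 0 * X 1 +
      C ((d 1 1 : ℝ) : ℂ) * X 0 ^ 2)

/-- `B̄₂(y₀,y₁)`: the coefficient of `x₀x₁` in `K̄`. -/
def Bbar2 : MvPolynomial (Fin 2) ℂ :=
  X 0 * X 1 - C ((t : ℝ) : ℂ) *
    (C ((d 0 (-1) : ℝ) : ℂ) * X 1 ^ 2 + C ((d 0 0 : ℝ) : ℂ) * X 0 * X 1 +
      C ((d 0 1 : ℝ) : ℂ) * X 0 ^ 2)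

/-- `C̄₂(y₀,y₁)`: the coefficient of `x₁²` in `K̄`. -/
def Cbar2 : MvPolynomial (Fin 2) ℂ :=
  -(C ((t : ℝ) : ℂ)) *
    (C ((d (-1) (-1) : ℝ) : ℂ) * X 1 ^ 2 + C ((d (-1) 0 : ℝ) : ℂ) * X 0 * X 1 +
      C ((d (-1) 1 : ℝ) : ℂ) * X 0 ^ 2)

/-- The discriminant `Δ₂(y₀,y₁) = B̄₂² - 4Ā₂C̄₂`, homogeneous of degree 4. -/
def Delta2 : MvPolynomial (Fin 2) ℂ :=
  Bbar2 d t ^ 2 - 4 * Abar2 d t * Cbar2 d t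

/-- `[a:b] ∈ ℙ¹(ℂ)` is a double root of the homogeneous polynomial `p`:
`(bX - aY)²` divides `p(X,Y)`. -/
def IsDoubleRootAt (a b : ℂ) (p : MvPolynomial (Fin 2) ℂ) : Prop :=
  (C b * X 0 - C a * X 1) ^ 2 ∣ p

/-- The step set of the model is included in a closed half plane whose boundary passes
through the origin. -/
def StepSetInHalfPlane : Prop :=
  ∃ u v : ℝ, (u, v) ≠ (0, 0) ∧
    ∀ i ∈ ({-1, 0, 1} : Set ℤ), ∀ j ∈ ({-1, 0, 1} : Set ℤ),
      (i, j) ≠ (0, 0) → d i j ≠ 0 → 0 ≤ u * (i : ℝ) + v * (j : ℝ)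

/-- `α₂ = β₂` for the first family of (G0). -/
def alpha2 : ℝ := 1 - 2*t*(d 0 0) + t^2*(d 0 0)^2 - 4*t^2*(d (-1) 1)*(d 1 (-1))

/-- `α₃` for the first family of (G0). -/
def alpha3 : ℝ := 2*t^2*(d 1 0)*(d 0 0) - 2*t*(d 1 0) - 4*t^2*(d 0 1)*(d 1 (-1))

/-- `α₄` for the first family of (G0). -/
def alpha4 : ℝ := t^2*((d 1 0)^2 - 4*(d 1 1)*(d 1 (-1)))

/-- `β₃` for the first family of (G0). -/
def beta3 : ℝ := 2*t^2*(d 0 1)*(d 0 0) - 2*t*(d 0 1) - 4*t^2*(d 1 0)*(d (-1) 1)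

/-- `β₄` for the first family of (G0). -/
def beta4 : ℝ := t^2*((d 0 1)^2 - 4*(d 1 1)*(d (-1) 1))

/-- The kernel polynomial as a function `ℂ × ℂ → ℂ`:
`K(x,y,t) = xy - t Σ_{i,j=0}^{2} d_{i-1,j-1} x^i y^j`. -/
def kernelKfun (x y : ℂ) : ℂ :=
  x * y - ((t : ℝ) : ℂ) *
    ∑ i ∈ Finset.range 3, ∑ j ∈ Finset.range 3,
      ((d ((i : ℤ) - 1) ((j : ℤ) - 1) : ℝ) : ℂ) * x ^ i * y ^ j


lemma eval_kernelKbar1 (a b c e : ℂ) : eval ![a,b,c,e] (kernelKbar d t) =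
    eval ![a,b] (Abar1 d t) * c^2 + eval ![a,b] (Bbar1 d t) * c * e +
      eval ![a,b] (Cbar1 d t) * e^2 := by
  simp [kernelKbar, Abar1, Bbar1, Cbar1, Finset.sum_range_succ]
  ring

lemma eval_kernelKbar2 (a b c e : ℂ) : eval ![a,b,c,e] (kernelKbar d t) =
    eval ![c,e] (Abar2 d t) * a^2 + eval ![c,e] (Bbar2 d t) * a * b +
      eval ![c,e] (Cbar2 d t) * b^2 := by
  simp [kernelKbar, Abar2, Bbar2, Cbar2, Finset.sum_range_succ]
  ring

lemma eval_Delta1' (a b : ℂ) : eval ![a,b] (Delta1 d t) =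
    eval ![a,b] (Bbar1 d t)^2 - 4 * eval ![a,b] (Abar1 d t) * eval ![a,b] (Cbar1 d t) := by
  simp [Delta1]

lemma eval_Delta2' (c e : ℂ) : eval ![c,e] (Delta2 d t) =
    eval ![c,e] (Bbar2 d t)^2 - 4 * eval ![c,e] (Abar2 d t) * eval ![c,e] (Cbar2 d t) := by
  simp [Delta2]

lemma eval_kernelK1 (x y : ℂ) : eval ![x,y] (kernelK d t) =
    (-((t:ℝ):ℂ) * (((d (-1) 1 : ℝ):ℂ) + ((d 0 1 : ℝ):ℂ)*x + ((d 1 1 : ℝ):ℂ)*x^2)) * y^2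
    + (x - ((t:ℝ):ℂ) * (((d (-1) 0 : ℝ):ℂ) + ((d 0 0 : ℝ):ℂ)*x + ((d 1 0 : ℝ):ℂ)*x^2)) * y
    + (-((t:ℝ):ℂ) * (((d (-1) (-1) : ℝ):ℂ) + ((d 0 (-1) : ℝ):ℂ)*x + ((d 1 (-1) : ℝ):ℂ)*x^2)) := by
  simp [kernelK, Finset.sum_range_succ]
  ring

lemma eval_kernelK2 (x y : ℂ) : eval ![x,y] (kernelK d t) =
    (-((t:ℝ):ℂ) * (((d 1 (-1) : ℝ):ℂ) + ((d 1 0 : ℝ):ℂ)*y + ((d 1 1 : ℝ):ℂ)*y^2)) * x^2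
    + (y - ((t:ℝ):ℂ) * (((d 0 (-1) : ℝ):ℂ) + ((d 0 0 : ℝ):ℂ)*y + ((d 0 1 : ℝ):ℂ)*y^2)) * x
    + (-((t:ℝ):ℂ) * (((d (-1) (-1) : ℝ):ℂ) + ((d (-1) 0 : ℝ):ℂ)*y + ((d (-1) 1 : ℝ):ℂ)*y^2)) := by
  simp [kernelK, Finset.sum_range_succ]
  ring

lemma eval_Abar1 (a b : ℂ) : eval ![a,b] (Abar1 d t) =
    -((t:ℝ):ℂ) * (((d (-1) 1 : ℝ):ℂ) * b^2 + ((d 0 1 : ℝ):ℂ)*a*b + ((d 1 1 : ℝ):ℂ)*a^2) := by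
  simp [Abar1]
  try ring

lemma eval_Bbar1 (a b : ℂ) : eval ![a,b] (Bbar1 d t) =
    a*b - ((t:ℝ):ℂ) * (((d (-1) 0 : ℝ):ℂ) * b^2 + ((d 0 0 : ℝ):ℂ)*a*b + ((d 1 0 : ℝ):ℂ)*a^2) := by
  simp [Bbar1]
  try ring

lemma eval_Cbar1 (a b : ℂ) : eval ![a,b] (Cbar1 d t) =
    -((t:ℝ):ℂ) * (((d (-1) (-1) : ℝ):ℂ) * b^2 + ((d 0 (-1) : ℝ):ℂ)*a*b + ((d 1 (-1) : ℝ):ℂ)*a^2) := by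
  simp [Cbar1]
  try ring

lemma eval_Abar2 (c e : ℂ) : eval ![c,e] (Abar2 d t) =
    -((t:ℝ):ℂ) * (((d 1 (-1) : ℝ):ℂ) * e^2 + ((d 1 0 : ℝ):ℂ)*c*e + ((d 1 1 : ℝ):ℂ)*c^2) := by
  simp [Abar2]
  try ring

lemma eval_Bbar2 (c e : ℂ) : eval ![c,e] (Bbar2 d t) =
    c*e - ((t:ℝ):ℂ) * (((d 0 (-1) : ℝ):ℂ) * e^2 + ((d 0 0 : ℝ):ℂ)*c*e + ((d 0 1 : ℝ):ℂ)*c^2) := by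
  simp [Bbar2]
  try ring

lemma eval_Cbar2 (c e : ℂ) : eval ![c,e] (Cbar2 d t) =
    -((t:ℝ):ℂ) * (((d (-1) (-1) : ℝ):ℂ) * e^2 + ((d (-1) 0 : ℝ):ℂ)*c*e + ((d (-1) 1 : ℝ):ℂ)*c^2) := by
  simp [Cbar2]
  try ring

lemma factor1 (al : ℂ)
    (hA : ((t:ℝ):ℂ)*((d (-1) 1:ℝ):ℂ) + ((t:ℝ):ℂ)*((d 0 1:ℝ):ℂ)*al + ((t:ℝ):ℂ)*((d 1 1:ℝ):ℂ)*al^2 = 0)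
    (hB : al - ((t:ℝ):ℂ)*((d (-1) 0:ℝ):ℂ) - ((t:ℝ):ℂ)*((d 0 0:ℝ):ℂ)*al - ((t:ℝ):ℂ)*((d 1 0:ℝ):ℂ)*al^2 = 0)
    (hC : ((t:ℝ):ℂ)*((d (-1) (-1):ℝ):ℂ) + ((t:ℝ):ℂ)*((d 0 (-1):ℝ):ℂ)*al + ((t:ℝ):ℂ)*((d 1 (-1):ℝ):ℂ)*al^2 = 0) :
    kernelK d t = (X 0 - C al) *
      ((C (-((t:ℝ):ℂ)*((d 1 1:ℝ):ℂ)) * X 0 + C (-((t:ℝ):ℂ)*((d 0 1:ℝ):ℂ) - ((t:ℝ):ℂ)*((d 1 1:ℝ):ℂ)*al)) * X 1^2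
      + (C (-((t:ℝ):ℂ)*((d 1 0:ℝ):ℂ)) * X 0 + C (1 - ((t:ℝ):ℂ)*((d 0 0:ℝ):ℂ) - ((t:ℝ):ℂ)*((d 1 0:ℝ):ℂ)*al)) * X 1
      + (C (-((t:ℝ):ℂ)*((d 1 (-1):ℝ):ℂ)) * X 0 + C (-((t:ℝ):ℂ)*((d 0 (-1):ℝ):ℂ) - ((t:ℝ):ℂ)*((d 1 (-1):ℝ):ℂ)*al))) := by
  have hA' := congrArg (C : ℂ → MvPolynomial (Fin 2) ℂ) hA
  have hB' := congrArg (C : ℂ → MvPolynomial (Fin 2) ℂ) hB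
  have hC' := congrArg (C : ℂ → MvPolynomial (Fin 2) ℂ) hC
  simp only [map_add, map_mul, map_sub, map_pow, map_zero, map_one] at hA' hB' hC'
  simp only [kernelK, Finset.sum_range_succ, Finset.sum_range_zero, Nat.cast_zero,
    Nat.cast_one, Nat.cast_ofNat, map_add, map_mul, map_sub, map_pow, map_one]
  norm_num
  linear_combination (-(X 1^2 : MvPolynomial (Fin 2) ℂ)) * hA' + (X 1 : MvPolynomial (Fin 2) ℂ) * hB' - hC'

lemma factor2 (be : ℂ)
    (hA : ((t:ℝ):ℂ)*((d 1 (-1):ℝ):ℂ) + ((t:ℝ):ℂ)*((d 1 0:ℝ):ℂ)*be + ((t:ℝ):ℂ)*((d 1 1:ℝ):ℂ)*be^2 = 0)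
    (hB : be - ((t:ℝ):ℂ)*((d 0 (-1):ℝ):ℂ) - ((t:ℝ):ℂ)*((d 0 0:ℝ):ℂ)*be - ((t:ℝ):ℂ)*((d 0 1:ℝ):ℂ)*be^2 = 0)
    (hC : ((t:ℝ):ℂ)*((d (-1) (-1):ℝ):ℂ) + ((t:ℝ):ℂ)*((d (-1) 0:ℝ):ℂ)*be + ((t:ℝ):ℂ)*((d (-1) 1:ℝ):ℂ)*be^2 = 0) :
    kernelK d t = (X 1 - C be) *
      ((C (-((t:ℝ):ℂ)*((d 1 1:ℝ):ℂ)) * X 1 + C (-((t:ℝ):ℂ)*((d 1 0:ℝ):ℂ) - ((t:ℝ):ℂ)*((d 1 1:ℝ):ℂ)*be)) * X 0^2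
      + (C (-((t:ℝ):ℂ)*((d 0 1:ℝ):ℂ)) * X 1 + C (1 - ((t:ℝ):ℂ)*((d 0 0:ℝ):ℂ) - ((t:ℝ):ℂ)*((d 0 1:ℝ):ℂ)*be)) * X 0
      + (C (-((t:ℝ):ℂ)*((d (-1) 1:ℝ):ℂ)) * X 1 + C (-((t:ℝ):ℂ)*((d (-1) 0:ℝ):ℂ) - ((t:ℝ):ℂ)*((d (-1) 1:ℝ):ℂ)*be))) := by
  have hA' := congrArg (C : ℂ → MvPolynomial (Fin 2) ℂ) hA
  have hB' := congrArg (C : ℂ → MvPolynomial (Fin 2) ℂ) hB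
  have hC' := congrArg (C : ℂ → MvPolynomial (Fin 2) ℂ) hC
  simp only [map_add, map_mul, map_sub, map_pow, map_zero, map_one] at hA' hB' hC'
  simp only [kernelK, Finset.sum_range_succ, Finset.sum_range_zero, Nat.cast_zero,
    Nat.cast_one, Nat.cast_ofNat, map_add, map_mul, map_sub, map_pow, map_one]
  norm_num
  linear_combination (-(X 0^2 : MvPolynomial (Fin 2) ℂ)) * hA' + (X 0 : MvPolynomial (Fin 2) ℂ) * hB' - hC'

lemma deg0_quad (i j : Fin 2) (hij : i ≠ j) (u v w : ℂ) :
    degreeOf i (C u + C v * X j + C w * (X j * X j) : MvPolynomial (Fin 2) ℂ) ≤ 0 := by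
  have hXj : degreeOf i (X j : MvPolynomial (Fin 2) ℂ) = 0 := by
    rw [degreeOf_X]; simp [hij]
  have h1 : degreeOf i (C v * X j : MvPolynomial (Fin 2) ℂ) ≤ 0 :=
    le_trans (degreeOf_mul_le _ _ _) (by simp [hXj])
  have h2 : degreeOf i (X j * X j : MvPolynomial (Fin 2) ℂ) ≤ 0 :=
    le_trans (degreeOf_mul_le _ _ _) (by simp [hXj])
  have h3 : degreeOf i (C w * (X j * X j) : MvPolynomial (Fin 2) ℂ) ≤ 0 :=
    le_trans (degreeOf_mul_le _ _ _) (by simp; omega)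
  have h4 : degreeOf i (C u + C v * X j : MvPolynomial (Fin 2) ℂ) ≤ 0 :=
    le_trans (degreeOf_add_le _ _ _) (by simp [h1])
  exact le_trans (degreeOf_add_le _ _ _) (by omega)

lemma deg_le_one (i : Fin 2) (p q : MvPolynomial (Fin 2) ℂ)
    (hp : degreeOf i p ≤ 0) (hq : degreeOf i q ≤ 0) :
    degreeOf i (X i * p + q) ≤ 1 := by
  have hX : degreeOf i (X i : MvPolynomial (Fin 2) ℂ) ≤ 1 := by rw [degreeOf_X]; simp
  have h1 : degreeOf i (X i * p) ≤ 1 := le_trans (degreeOf_mul_le _ _ _) (by omega)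
  exact le_trans (degreeOf_add_le _ _ _) (by omega)

lemma tcontr (h : WalkHyp d t) (hone : (1:ℂ) - ((t:ℝ):ℂ)*((d 0 0:ℝ):ℂ) = 0) : False := by
  have hc : ((1 - t * d 0 0 : ℝ) : ℂ) = 0 := by push_cast; linear_combination hone
  have hr : 1 - t * d 0 0 = 0 := by exact_mod_cast hc
  obtain ⟨hbd, _, ⟨ht0, ht1⟩, _⟩ := h
  have h00 := hbd 0 (by simp) 0 (by simp)
  nlinarith [h00.1, h00.2]

lemma triple1 (h : WalkHyp d t) (hnd : ¬ Degenerate d t) (a b : ℂ) (hab : (a, b) ≠ (0,0)) :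
    ¬(eval ![a,b] (Abar1 d t) = 0 ∧ eval ![a,b] (Bbar1 d t) = 0 ∧ eval ![a,b] (Cbar1 d t) = 0) := by
  rw [Degenerate] at hnd; push_neg at hnd
  obtain ⟨hirr, hdx, hdy⟩ := hnd
  obtain ⟨ht0, ht1⟩ := h.2.2.1
  have htne : ((t:ℝ):ℂ) ≠ 0 := by exact_mod_cast ht0.ne'
  rintro ⟨hA, hB, hC⟩
  rw [eval_Abar1] at hA; rw [eval_Bbar1] at hB; rw [eval_Cbar1] at hC
  by_cases hb : b = 0
  · have ha : a ≠ 0 := by intro h0; exact hab (by rw [h0, hb])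
    rw [hb] at hA hB hC
    have ha2 : a^2 ≠ 0 := pow_ne_zero _ ha
    have hd11 : ((d 1 1:ℝ):ℂ) = 0 := by
      have h2 : ((t:ℝ):ℂ) * ((d 1 1:ℝ):ℂ) * a^2 = 0 := by linear_combination -hA
      rcases mul_eq_zero.1 h2 with h3 | h3
      · exact (mul_eq_zero.1 h3).resolve_left htne
      · exact absurd h3 ha2
    have hd10 : ((d 1 0:ℝ):ℂ) = 0 := by
      have h2 : ((t:ℝ):ℂ) * ((d 1 0:ℝ):ℂ) * a^2 = 0 := by linear_combination -hB
      rcases mul_eq_zero.1 h2 with h3 | h3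
      · exact (mul_eq_zero.1 h3).resolve_left htne
      · exact absurd h3 ha2
    have hd1m1 : ((d 1 (-1):ℝ):ℂ) = 0 := by
      have h2 : ((t:ℝ):ℂ) * ((d 1 (-1):ℝ):ℂ) * a^2 = 0 := by linear_combination -hC
      rcases mul_eq_zero.1 h2 with h3 | h3
      · exact (mul_eq_zero.1 h3).resolve_left htne
      · exact absurd h3 ha2
    have hk : kernelK d t = X 0 * (X 1 + C (-((t:ℝ):ℂ)) * (C ((d 0 (-1):ℝ):ℂ) +
        C ((d 0 0:ℝ):ℂ) * X 1 + C ((d 0 1:ℝ):ℂ) * (X 1 * X 1))) + C (-((t:ℝ):ℂ)) *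
        (C ((d (-1) (-1):ℝ):ℂ) + C ((d (-1) 0:ℝ):ℂ) * X 1 + C ((d (-1) 1:ℝ):ℂ) * (X 1 * X 1)) := by
      simp only [kernelK, Finset.sum_range_succ, Finset.sum_range_zero, Nat.cast_zero,
        Nat.cast_one, Nat.cast_ofNat]
      norm_num [hd11, hd10, hd1m1]
      ring
    have hle : degreeOf 0 (kernelK d t) ≤ 1 := by
      rw [hk]
      refine deg_le_one _ _ _ ?_ ?_
      · have := deg0_quad 0 1 (by decide) ((d 0 (-1):ℝ):ℂ) ((d 0 0:ℝ):ℂ) ((d 0 1:ℝ):ℂ)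
        have hXj : degreeOf (0 : Fin 2) (X 1 : MvPolynomial (Fin 2) ℂ) = 0 := by
          rw [degreeOf_X]; simp
        have h1 : degreeOf (0 : Fin 2) (C (-((t:ℝ):ℂ)) * (C ((d 0 (-1):ℝ):ℂ) +
            C ((d 0 0:ℝ):ℂ) * X 1 + C ((d 0 1:ℝ):ℂ) * (X 1 * X 1))) ≤ 0 :=
          le_trans (degreeOf_mul_le _ _ _) (by simp; omega)
        exact le_trans (degreeOf_add_le _ _ _) (by omega)
      · have := deg0_quad 0 1 (by decide) ((d (-1) (-1):ℝ):ℂ) ((d (-1) 0:ℝ):ℂ) ((d (-1) 1:ℝ):ℂ)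
        exact le_trans (degreeOf_mul_le _ _ _) (by simp; omega)
    omega
  · set al := a / b with hal
    have hA' : ((t:ℝ):ℂ)*((d (-1) 1:ℝ):ℂ) + ((t:ℝ):ℂ)*((d 0 1:ℝ):ℂ)*al +
        ((t:ℝ):ℂ)*((d 1 1:ℝ):ℂ)*al^2 = 0 := by
      rw [hal]; field_simp; linear_combination -hA
    have hB' : al - ((t:ℝ):ℂ)*((d (-1) 0:ℝ):ℂ) - ((t:ℝ):ℂ)*((d 0 0:ℝ):ℂ)*al -
        ((t:ℝ):ℂ)*((d 1 0:ℝ):ℂ)*al^2 = 0 := by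
      rw [hal]; field_simp; linear_combination hB
    have hC' : ((t:ℝ):ℂ)*((d (-1) (-1):ℝ):ℂ) + ((t:ℝ):ℂ)*((d 0 (-1):ℝ):ℂ)*al +
        ((t:ℝ):ℂ)*((d 1 (-1):ℝ):ℂ)*al^2 = 0 := by
      rw [hal]; field_simp; linear_combination -hC
    have hfac := factor1 d t al hA' hB' hC'
    rcases hirr.isUnit_or_isUnit hfac with hu | hu
    · have := hu.map (eval ![al, (0:ℂ)])
      simp at this
    · have hne : ∀ x y : ℂ, x ≠ al → eval ![x,y] (kernelK d t) ≠ 0 := by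
        intro x y hx
        rw [hfac, map_mul]
        refine mul_ne_zero ?_ (hu.map (eval ![x,y])).ne_zero
        simpa using sub_ne_zero.2 hx
      have key : ∀ x : ℂ, x ≠ al →
          ((-((t:ℝ):ℂ) * (((d (-1) 1:ℝ):ℂ) + ((d 0 1:ℝ):ℂ)*x + ((d 1 1:ℝ):ℂ)*x^2)) = 0 ∧
           (x - ((t:ℝ):ℂ) * (((d (-1) 0:ℝ):ℂ) + ((d 0 0:ℝ):ℂ)*x + ((d 1 0:ℝ):ℂ)*x^2)) = 0) := by
        intro x hx
        by_contra hcon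
        obtain ⟨y, hy⟩ := quadRoot _ _
          (-((t:ℝ):ℂ) * (((d (-1) (-1):ℝ):ℂ) + ((d 0 (-1):ℝ):ℂ)*x + ((d 1 (-1):ℝ):ℂ)*x^2)) hcon
        exact hne x y hx (by rw [eval_kernelK1]; linear_combination hy)
      have hstep : ∀ z : ℂ, z ≠ 0 → al + z ≠ al := fun z hz hq => hz (by linear_combination hq)
      have e1 := (key (al+1) (hstep 1 one_ne_zero)).2
      have e2 := (key (al+2) (hstep 2 two_ne_zero)).2
      have e3 := (key (al+3) (hstep 3 three_ne_zero)).2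
      have hone : (1:ℂ) - ((t:ℝ):ℂ)*((d 0 0:ℝ):ℂ) = 0 := by
        linear_combination (-1 - (2*al+3)/2) * e1 + (1 + (2*al+3)) * e2 + (-(2*al+3)/2) * e3
      exact tcontr d t h hone

lemma triple2 (h : WalkHyp d t) (hnd : ¬ Degenerate d t) (c e : ℂ) (hce : (c, e) ≠ (0,0)) :
    ¬(eval ![c,e] (Abar2 d t) = 0 ∧ eval ![c,e] (Bbar2 d t) = 0 ∧ eval ![c,e] (Cbar2 d t) = 0) := by
  rw [Degenerate] at hnd; push_neg at hnd
  obtain ⟨hirr, hdx, hdy⟩ := hnd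
  obtain ⟨ht0, ht1⟩ := h.2.2.1
  have htne : ((t:ℝ):ℂ) ≠ 0 := by exact_mod_cast ht0.ne'
  rintro ⟨hA, hB, hC⟩
  rw [eval_Abar2] at hA; rw [eval_Bbar2] at hB; rw [eval_Cbar2] at hC
  by_cases hb : e = 0
  · have ha : c ≠ 0 := by intro h0; exact hce (by rw [h0, hb])
    rw [hb] at hA hB hC
    have ha2 : c^2 ≠ 0 := pow_ne_zero _ ha
    have hd11 : ((d 1 1:ℝ):ℂ) = 0 := by
      have h2 : ((t:ℝ):ℂ) * ((d 1 1:ℝ):ℂ) * c^2 = 0 := by linear_combination -hA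
      rcases mul_eq_zero.1 h2 with h3 | h3
      · exact (mul_eq_zero.1 h3).resolve_left htne
      · exact absurd h3 ha2
    have hd01 : ((d 0 1:ℝ):ℂ) = 0 := by
      have h2 : ((t:ℝ):ℂ) * ((d 0 1:ℝ):ℂ) * c^2 = 0 := by linear_combination -hB
      rcases mul_eq_zero.1 h2 with h3 | h3
      · exact (mul_eq_zero.1 h3).resolve_left htne
      · exact absurd h3 ha2
    have hdm11 : ((d (-1) 1:ℝ):ℂ) = 0 := by
      have h2 : ((t:ℝ):ℂ) * ((d (-1) 1:ℝ):ℂ) * c^2 = 0 := by linear_combination -hC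
      rcases mul_eq_zero.1 h2 with h3 | h3
      · exact (mul_eq_zero.1 h3).resolve_left htne
      · exact absurd h3 ha2
    have hk : kernelK d t = X 1 * (X 0 + C (-((t:ℝ):ℂ)) * (C ((d (-1) 0:ℝ):ℂ) +
        C ((d 0 0:ℝ):ℂ) * X 0 + C ((d 1 0:ℝ):ℂ) * (X 0 * X 0))) + C (-((t:ℝ):ℂ)) *
        (C ((d (-1) (-1):ℝ):ℂ) + C ((d 0 (-1):ℝ):ℂ) * X 0 + C ((d 1 (-1):ℝ):ℂ) * (X 0 * X 0)) := by
      simp only [kernelK, Finset.sum_range_succ, Finset.sum_range_zero, Nat.cast_zero,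
        Nat.cast_one, Nat.cast_ofNat]
      norm_num [hd11, hd01, hdm11]
      ring
    have hle : degreeOf 1 (kernelK d t) ≤ 1 := by
      rw [hk]
      refine deg_le_one _ _ _ ?_ ?_
      · have := deg0_quad 1 0 (by decide) ((d (-1) 0:ℝ):ℂ) ((d 0 0:ℝ):ℂ) ((d 1 0:ℝ):ℂ)
        have hXj : degreeOf (1 : Fin 2) (X 0 : MvPolynomial (Fin 2) ℂ) = 0 := by
          rw [degreeOf_X]; simp
        have h1 : degreeOf (1 : Fin 2) (C (-((t:ℝ):ℂ)) * (C ((d (-1) 0:ℝ):ℂ) +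
            C ((d 0 0:ℝ):ℂ) * X 0 + C ((d 1 0:ℝ):ℂ) * (X 0 * X 0))) ≤ 0 :=
          le_trans (degreeOf_mul_le _ _ _) (by simp; omega)
        exact le_trans (degreeOf_add_le _ _ _) (by omega)
      · have := deg0_quad 1 0 (by decide) ((d (-1) (-1):ℝ):ℂ) ((d 0 (-1):ℝ):ℂ) ((d 1 (-1):ℝ):ℂ)
        exact le_trans (degreeOf_mul_le _ _ _) (by simp; omega)
    omega
  · set be := c / e with hbe
    have hA' : ((t:ℝ):ℂ)*((d 1 (-1):ℝ):ℂ) + ((t:ℝ):ℂ)*((d 1 0:ℝ):ℂ)*be +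
        ((t:ℝ):ℂ)*((d 1 1:ℝ):ℂ)*be^2 = 0 := by
      rw [hbe]; field_simp; linear_combination -hA
    have hB' : be - ((t:ℝ):ℂ)*((d 0 (-1):ℝ):ℂ) - ((t:ℝ):ℂ)*((d 0 0:ℝ):ℂ)*be -
        ((t:ℝ):ℂ)*((d 0 1:ℝ):ℂ)*be^2 = 0 := by
      rw [hbe]; field_simp; linear_combination hB
    have hC' : ((t:ℝ):ℂ)*((d (-1) (-1):ℝ):ℂ) + ((t:ℝ):ℂ)*((d (-1) 0:ℝ):ℂ)*be +
        ((t:ℝ):ℂ)*((d (-1) 1:ℝ):ℂ)*be^2 = 0 := by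
      rw [hbe]; field_simp; linear_combination -hC
    have hfac := factor2 d t be hA' hB' hC'
    rcases hirr.isUnit_or_isUnit hfac with hu | hu
    · have := hu.map (eval ![(0:ℂ), be])
      simp at this
    · have hne : ∀ x y : ℂ, y ≠ be → eval ![x,y] (kernelK d t) ≠ 0 := by
        intro x y hy
        rw [hfac, map_mul]
        refine mul_ne_zero ?_ (hu.map (eval ![x,y])).ne_zero
        simpa using sub_ne_zero.2 hy
      have key : ∀ y : ℂ, y ≠ be →
          ((-((t:ℝ):ℂ) * (((d 1 (-1):ℝ):ℂ) + ((d 1 0:ℝ):ℂ)*y + ((d 1 1:ℝ):ℂ)*y^2)) = 0 ∧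
           (y - ((t:ℝ):ℂ) * (((d 0 (-1):ℝ):ℂ) + ((d 0 0:ℝ):ℂ)*y + ((d 0 1:ℝ):ℂ)*y^2)) = 0) := by
        intro y hy
        by_contra hcon
        obtain ⟨x, hx⟩ := quadRoot _ _
          (-((t:ℝ):ℂ) * (((d (-1) (-1):ℝ):ℂ) + ((d (-1) 0:ℝ):ℂ)*y + ((d (-1) 1:ℝ):ℂ)*y^2)) hcon
        exact hne x y hy (by rw [eval_kernelK2]; linear_combination hx)
      have hstep : ∀ z : ℂ, z ≠ 0 → be + z ≠ be := fun z hz hq => hz (by linear_combination hq)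
      have e1 := (key (be+1) (hstep 1 one_ne_zero)).2
      have e2 := (key (be+2) (hstep 2 two_ne_zero)).2
      have e3 := (key (be+3) (hstep 3 three_ne_zero)).2
      have hone : (1:ℂ) - ((t:ℝ):ℂ)*((d 0 0:ℝ):ℂ) = 0 := by
        linear_combination (-1 - (2*be+3)/2) * e1 + (1 + (2*be+3)) * e2 + (-(2*be+3)/2) * e3
      exact tcontr d t h hone

/-- for a nondegenerate model and `P = ([a:b],[c:e]) ∈ Ē_t`: `P` is the
unique point of `Ē_t` with first coordinate `[a:b]` (i.e. `P` is fixed by the vertical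
switch `ι₁`) iff `Δ₁(a,b) = 0`; and `P` is the unique point of `Ē_t` with second
coordinate `[c:e]` (i.e. `P` is fixed by the horizontal switch `ι₂`) iff `Δ₂(c,e) = 0`. -/
theorem fixed_by_switches_iff_discriminant (h : WalkHyp d t) (hnd : ¬ Degenerate d t)
    (a b c e : ℂ) (hab : (a, b) ≠ (0, 0)) (hce : (c, e) ≠ (0, 0))
    (hon : OnKernelCurve d t a b c e) :
    ((∀ c' e' : ℂ, (c', e') ≠ (0, 0) → OnKernelCurve d t a b c' e' →
        ∃ mu : ℂ, mu ≠ 0 ∧ c' = mu * c ∧ e' = mu * e) ↔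
      eval ![a, b] (Delta1 d t) = 0) ∧
    ((∀ a' b' : ℂ, (a', b') ≠ (0, 0) → OnKernelCurve d t a' b' c e →
        ∃ lam : ℂ, lam ≠ 0 ∧ a' = lam * a ∧ b' = lam * b) ↔
      eval ![c, e] (Delta2 d t) = 0) := by
  have hon1 : eval ![a,b] (Abar1 d t) * c^2 + eval ![a,b] (Bbar1 d t) * c * e +
      eval ![a,b] (Cbar1 d t) * e^2 = 0 := by
    rw [← eval_kernelKbar1]; exact hon
  have hon2 : eval ![c,e] (Abar2 d t) * a^2 + eval ![c,e] (Bbar2 d t) * a * b +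
      eval ![c,e] (Cbar2 d t) * b^2 = 0 := by
    rw [← eval_kernelKbar2]; exact hon
  have hq1 := quadUnique _ _ _ c e (triple1 d t h hnd a b hab) hce hon1
  have hq2 := quadUnique _ _ _ a b (triple2 d t h hnd c e hce) hab hon2
  constructor
  · rw [eval_Delta1', ← hq1]
    constructor
    · intro H c' e' h1 h2
      exact H c' e' h1 (by unfold OnKernelCurve; rw [eval_kernelKbar1]; linear_combination h2)
    · intro H c' e' h1 h2
      refine H c' e' h1 ?_
      unfold OnKernelCurve at h2
      rw [eval_kernelKbar1] at h2
      linear_combination h2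
  · rw [eval_Delta2', ← hq2]
    constructor
    · intro H a' b' h1 h2
      exact H a' b' h1 (by unfold OnKernelCurve; rw [eval_kernelKbar2]; linear_combination h2)
    · intro H a' b' h1 h2
      refine H a' b' h1 ?_
      unfold OnKernelCurve at h2
      rw [eval_kernelKbar2] at h2
      linear_combination h2

end
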